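/- Let k ≥ 2 and c₀, c₁, …, c_k ∈ ℝ. The k×k matrix C with entries C_{ij} = δ_{ij} c_i + c₀ (i,j ∈ {1,…,k}) is positive semidefinite if and only if either all c₀, c₁, …, c_k are nonnegative, or there exists an index i ∈ {0,…,k} such that c_i < 0, c_j > 0 for all j ≠ i, and 1/c₀ + 1/c₁ + ⋯ + 1/c_k ≤ 0. -/

import Mathlib

open Finset
open Matrix

private lemma cs_aux {ι : Type*} (s : Finset ι) (c v : ι → ℝ) (hc : ∀ j ∈ s, 0 < c j) :
    (∑ j ∈ s, v j) ^ 2 ≤ (∑ j ∈ s, (c j)⁻¹) * ∑ j ∈ s, c j * v j ^ 2 := by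
  rcases s.eq_empty_or_nonempty with rfl | hs
  · simp
  have hS : 0 < ∑ j ∈ s, (c j)⁻¹ :=
    Finset.sum_pos (fun j hj => inv_pos.mpr (hc j hj)) hs
  have h := Finset.sq_sum_div_le_sum_sq_div s v (g := fun j => (c j)⁻¹)
    (fun j hj => inv_pos.mpr (hc j hj))
  have h2 : ∑ j ∈ s, v j ^ 2 / (c j)⁻¹ = ∑ j ∈ s, c j * v j ^ 2 := by
    refine Finset.sum_congr rfl fun j hj => ?_
    rw [div_inv_eq_mul]; ring
  rw [h2, div_le_iff₀ hS] at h
  linarith [h]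

private lemma sum_pair {ι : Type*} [Fintype ι] [DecidableEq ι] (f : ι → ℝ) (j l : ι)
    (hjl : j ≠ l) (hz : ∀ m, m ≠ j → m ≠ l → f m = 0) : ∑ m, f m = f j + f l := by
  rw [← Finset.add_sum_erase _ f (Finset.mem_univ j)]
  congr 1
  rw [← Finset.add_sum_erase _ f (Finset.mem_erase.mpr ⟨hjl.symm, Finset.mem_univ l⟩),
    Finset.sum_eq_zero, add_zero]
  intro m hm
  simp only [Finset.mem_erase] at hm
  exact hz m hm.2.1 hm.1

/-- For `k ≥ 2` and `c₀, c₁, …, c_k ∈ ℝ`, the `k × k` matrix with entries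
`C_{ij} = δ_{ij} c_i + c₀` is positive semidefinite iff either all `c₀, …, c_k` are
nonnegative, or some `c_i < 0`, all other `c_j > 0`, and `1/c₀ + ⋯ + 1/c_k ≤ 0`. -/
theorem posSemidef_delta_plus_const_iff
    (k : ℕ) (hk : 2 ≤ k) (c : Fin (k + 1) → ℝ) :
    (Matrix.of fun i j : Fin k =>
        (if i = j then c i.succ else 0) + c 0).PosSemidef ↔
      ((∀ i, 0 ≤ c i) ∨
        ∃ i, c i < 0 ∧ (∀ j, j ≠ i → 0 < c j) ∧ ∑ j, (c j)⁻¹ ≤ 0) := by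
  haveI : NeZero k := ⟨by omega⟩
  have hquad : ∀ x : Fin k → ℝ,
      dotProduct (star x) ((Matrix.of fun i j : Fin k =>
        (if i = j then c i.succ else 0) + c 0) *ᵥ x)
      = ∑ i, c i.succ * x i ^ 2 + c 0 * (∑ i, x i) ^ 2 := by
    intro x
    simp only [star_trivial, dotProduct, Matrix.mulVec, Matrix.of_apply]
    have h : ∀ i : Fin k, (∑ j, ((if i = j then c i.succ else 0) + c 0) * x j)
        = c i.succ * x i + c 0 * ∑ j, x j := by
      intro i
      simp [add_mul, Finset.sum_add_distrib, ite_mul, Finset.sum_ite_eq, Finset.mul_sum]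
    calc (∑ i, x i * ∑ j, ((if i = j then c i.succ else 0) + c 0) * x j)
        = ∑ i, (c i.succ * x i ^ 2 + c 0 * (∑ j, x j) * x i) := by
          refine Finset.sum_congr rfl fun i _ => ?_
          rw [h i]; ring
      _ = _ := by
          rw [Finset.sum_add_distrib, ← Finset.mul_sum]
          ring
  have hherm : (Matrix.of fun i j : Fin k =>
      (if i = j then c i.succ else 0) + c 0).IsHermitian := by
    ext i j
    simp only [Matrix.conjTranspose_apply, Matrix.of_apply, star_trivial]
    rcases eq_or_ne i j with rfl | h
    · rfl
    · simp [h, h.symm]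
  rw [Matrix.posSemidef_iff_dotProduct_mulVec]
  constructor
  · rintro ⟨-, hpsd⟩
    have hQ : ∀ x : Fin k → ℝ, 0 ≤ ∑ i, c i.succ * x i ^ 2 + c 0 * (∑ i, x i) ^ 2 :=
      fun x => by rw [← hquad x]; exact hpsd x
    by_cases hall : ∀ i, 0 ≤ c i
    · exact Or.inl hall
    push_neg at hall
    obtain ⟨i, hi⟩ := hall
    -- pair inequalities
    have h0 : ∀ j : Fin k, 0 ≤ c 0 + c j.succ := by
      intro j
      have hq := hQ (fun m => if m = j then 1 else 0)
      have e1 : ∑ m : Fin k, (if m = j then (1:ℝ) else 0) = 1 := by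
        simp
      have e2 : ∑ m : Fin k, c m.succ * (if m = j then (1:ℝ) else 0) ^ 2 = c j.succ := by
        rw [Finset.sum_eq_single j]
        · simp
        · intro m _ hm; simp [hm]
        · simp
      rw [e1, e2] at hq
      nlinarith [hq]
    have hss : ∀ j l : Fin k, j ≠ l → 0 ≤ c j.succ + c l.succ := by
      intro j l hjl
      set x : Fin k → ℝ := fun m => if m = j then 1 else if m = l then -1 else 0 with hx
      have hq := hQ x
      have e1 : ∑ m, x m = 0 := by
        rw [sum_pair x j l hjl (fun m h1 h2 => by simp [hx, h1, h2])]
        simp [hx, hjl.symm]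
      have e2 : ∑ m, c m.succ * x m ^ 2 = c j.succ + c l.succ := by
        rw [sum_pair (fun m => c m.succ * x m ^ 2) j l hjl
          (fun m h1 h2 => by simp [hx, h1, h2])]
        simp [hx, hjl.symm]
      rw [e1, e2] at hq
      nlinarith [hq]
    have hpos : ∀ j, j ≠ i → 0 < c j := by
      intro j hj
      rcases Fin.eq_zero_or_eq_succ i with rfl | ⟨i₀, rfl⟩
      · rcases Fin.eq_zero_or_eq_succ j with rfl | ⟨j₀, rfl⟩
        · exact absurd rfl hj
        · have := h0 j₀; linarith
      · rcases Fin.eq_zero_or_eq_succ j with rfl | ⟨j₀, rfl⟩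
        · have := h0 i₀; linarith
        · have hne : j₀ ≠ i₀ := fun h => hj (by rw [h])
          have := hss j₀ i₀ hne; linarith
    refine Or.inr ⟨i, hi, hpos, ?_⟩
    rcases Fin.eq_zero_or_eq_succ i with rfl | ⟨i₀, rfl⟩
    · -- c 0 < 0
      set T := ∑ j : Fin k, (c j.succ)⁻¹ with hT
      have hTpos : 0 < T :=
        Finset.sum_pos (fun j _ => inv_pos.mpr (hpos j.succ (Fin.succ_ne_zero j)))
          Finset.univ_nonempty
      have hq := hQ (fun j => (c j.succ)⁻¹)
      have e : ∑ j : Fin k, c j.succ * ((c j.succ)⁻¹) ^ 2 = T := by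
        refine Finset.sum_congr rfl fun j _ => ?_
        have hne : c j.succ ≠ 0 := (hpos j.succ (Fin.succ_ne_zero j)).ne'
        field_simp
      rw [e] at hq
      rw [Fin.sum_univ_succ]
      by_contra hcon
      push_neg at hcon
      have h1 : c 0 * ((c 0)⁻¹ + T) < 0 := mul_neg_of_neg_of_pos hi hcon
      rw [mul_add, mul_inv_cancel₀ hi.ne] at h1
      nlinarith [mul_neg_of_pos_of_neg hTpos h1, hq]
    · -- c i₀.succ < 0
      have hc0 : 0 < c 0 := hpos 0 (Fin.succ_ne_zero i₀).symm
      set T : ℝ := (c 0)⁻¹ + ∑ j ∈ univ.erase i₀, (c j.succ)⁻¹ with hT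
      have hTpos : 0 < T := by
        refine add_pos_of_pos_of_nonneg (inv_pos.mpr hc0) (Finset.sum_nonneg fun j hj => ?_)
        have hj' : j ≠ i₀ := (Finset.mem_erase.mp hj).1
        exact (inv_pos.mpr (hpos j.succ (fun h => hj' (Fin.succ_injective _ h)))).le
      set x : Fin k → ℝ := fun j => if j = i₀ then T else -(c j.succ)⁻¹ with hx
      have hq := hQ x
      have e1 : ∑ j, x j = (c 0)⁻¹ := by
        rw [← Finset.add_sum_erase _ x (Finset.mem_univ i₀)]
        have h2 : ∑ j ∈ univ.erase i₀, x j = -∑ j ∈ univ.erase i₀, (c j.succ)⁻¹ := by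
          rw [← Finset.sum_neg_distrib]
          refine Finset.sum_congr rfl fun j hj => ?_
          simp [hx, (Finset.mem_erase.mp hj).1]
        rw [h2]
        simp only [hx, if_pos rfl, hT]
        ring
      have e2 : ∑ j, c j.succ * x j ^ 2
          = c i₀.succ * T ^ 2 + ∑ j ∈ univ.erase i₀, (c j.succ)⁻¹ := by
        rw [← Finset.add_sum_erase _ _ (Finset.mem_univ i₀)]
        congr 1
        · simp [hx]
        refine Finset.sum_congr rfl fun j hj => ?_
        have hj' : j ≠ i₀ := (Finset.mem_erase.mp hj).1
        have hne : c j.succ ≠ 0 := (hpos j.succ (fun h => hj' (Fin.succ_injective _ h))).ne'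
        simp only [hx, if_neg hj', neg_sq]
        field_simp
      rw [e1, e2] at hq
      have hc0inv : c 0 * ((c 0)⁻¹) ^ 2 = (c 0)⁻¹ := by
        field_simp
      rw [hc0inv] at hq
      -- hq : 0 ≤ c i₀.succ * T ^ 2 + ∑ erase + (c 0)⁻¹  = c i T² + T
      have hq' : 0 ≤ c i₀.succ * T ^ 2 + T := by rw [hT]; linarith [hq]
      have hgoal : ∑ j, (c j)⁻¹ = (c i₀.succ)⁻¹ + T := by
        rw [Fin.sum_univ_succ, ← Finset.add_sum_erase _ (fun j : Fin k => (c j.succ)⁻¹)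
          (Finset.mem_univ i₀), hT]
        ring
      rw [hgoal]
      by_contra hcon
      push_neg at hcon
      have h1 : c i₀.succ * ((c i₀.succ)⁻¹ + T) < 0 := mul_neg_of_neg_of_pos hi hcon
      rw [mul_add, mul_inv_cancel₀ hi.ne] at h1
      nlinarith [mul_neg_of_pos_of_neg hTpos h1, hq']
  · rintro (hall | ⟨i, hi, hpos, hsum⟩)
    · refine ⟨hherm, fun x => ?_⟩
      rw [hquad x]
      have h1 : (0:ℝ) ≤ ∑ i, c i.succ * x i ^ 2 :=
        Finset.sum_nonneg fun i _ => mul_nonneg (hall _) (sq_nonneg _)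
      have h2 : (0:ℝ) ≤ c 0 * (∑ i, x i) ^ 2 := mul_nonneg (hall 0) (sq_nonneg _)
      linarith
    · refine ⟨hherm, fun x => ?_⟩
      rw [hquad x]
      set L : Fin (k + 1) → ℝ := Fin.cons (∑ j, x j) x with hL
      have hQL : ∑ i, c i.succ * x i ^ 2 + c 0 * (∑ j, x j) ^ 2
          = ∑ j : Fin (k + 1), c j * L j ^ 2 := by
        rw [Fin.sum_univ_succ]
        simp only [hL, Fin.cons_zero, Fin.cons_succ]
        ring
      rw [hQL]
      set ε : Fin (k + 1) → ℝ := fun j => if j = 0 then 1 else -1 with hε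
      have hεsq : ∀ j, ε j ^ 2 = 1 := by
        intro j
        rcases eq_or_ne j 0 with rfl | h
        · simp [hε]
        · simp [hε, h]
      have hLrel : ∑ j : Fin (k + 1), ε j * L j = 0 := by
        rw [Fin.sum_univ_succ]
        simp [hε, hL, Fin.cons_zero, Fin.cons_succ, Fin.succ_ne_zero,
          Finset.sum_neg_distrib]
      have key : L i ^ 2 = (∑ j ∈ univ.erase i, ε j * L j) ^ 2 := by
        have h2 : ∑ j ∈ univ.erase i, ε j * L j = -(ε i * L i) := by
          have h3 := Finset.add_sum_erase univ (fun j => ε j * L j) (Finset.mem_univ i)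
          beta_reduce at h3
          rw [hLrel] at h3
          linarith [h3]
        rw [h2, neg_sq, mul_pow, hεsq i, one_mul]
      set A := ∑ j ∈ univ.erase i, c j * L j ^ 2 with hA'
      set S := ∑ j ∈ univ.erase i, (c j)⁻¹ with hS'
      have hA : 0 ≤ A :=
        Finset.sum_nonneg fun j hj =>
          mul_nonneg (hpos j (Finset.mem_erase.mp hj).1).le (sq_nonneg _)
      have hCS : L i ^ 2 ≤ S * A := by
        rw [key]
        have h4 := cs_aux (univ.erase i) c (fun j => ε j * L j)
          (fun j hj => hpos j (Finset.mem_erase.mp hj).1)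
        have h5 : ∑ j ∈ univ.erase i, c j * (ε j * L j) ^ 2 = A := by
          refine Finset.sum_congr rfl fun j _ => ?_
          rw [mul_pow, hεsq j, one_mul]
        rw [h5] at h4
        exact h4
      have hSle : S ≤ -(c i)⁻¹ := by
        have h6 := Finset.add_sum_erase univ (fun j => (c j)⁻¹) (Finset.mem_univ i)
        rw [← hS'] at h6  -- might fail; fallback linarith
        linarith [hsum, h6.symm ▸ hsum]
      have hsplit : ∑ j : Fin (k + 1), c j * L j ^ 2 = c i * L i ^ 2 + A := by
        rw [← Finset.add_sum_erase _ (fun j => c j * L j ^ 2) (Finset.mem_univ i)]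
      have e1 : c i * (S * A) ≤ c i * L i ^ 2 :=
        mul_le_mul_of_nonpos_left hCS hi.le
      have e2 : S * A ≤ -(c i)⁻¹ * A := mul_le_mul_of_nonneg_right hSle hA
      have e3 : c i * (-(c i)⁻¹ * A) ≤ c i * (S * A) :=
        mul_le_mul_of_nonpos_left e2 hi.le
      have e4 : c i * (-(c i)⁻¹ * A) = -A := by
        have : c i * (-(c i)⁻¹ * A) = -(c i * (c i)⁻¹) * A := by ring
        rw [this, mul_inv_cancel₀ hi.ne]
        ring
      rw [hsplit]
      linarith [e1, e3, e4 ▸ e3]
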